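/- (Remark 1, second-order truncation.) Let f : ℝ → ℝ be a measurable probability density (f ≥ 0, ∫_ℝ f = 1) that is bounded by some constant M ≥ 0, and let ε ≥ 0 be such that ∫_ℝ f(x)^{n+1} dx ≤ ε for every n ≥ 2. Then |∫_ℝ f(x)·e^{-f(x)} dx − (1 − ∫_ℝ f(x)^2 dx)| ≤ (e − 2)·ε, where e is Euler's number. -/

import Mathlib

open MeasureTheory Real

/-- `exp (-t) ≤ 1 - t + t^2/2` for `t ≥ 0`. -/
lemma exp_neg_le_quadratic {t : ℝ} (ht : 0 ≤ t) :
    Real.exp (-t) ≤ 1 - t + t ^ 2 / 2 := by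
  set F : ℝ → ℝ := fun t => 1 - t + t ^ 2 / 2 - Real.exp (-t) with hFdef
  have hF : ∀ s : ℝ, HasDerivAt F (-1 + s + Real.exp (-s)) s := by
    intro s
    have h1 : HasDerivAt (fun s : ℝ => Real.exp (-s)) (-Real.exp (-s)) s := by
      exact ((hasDerivAt_neg s).exp).congr_deriv (by ring)
    have h2 : HasDerivAt (fun s : ℝ => 1 - s + s ^ 2 / 2) (-1 + s) s := by
      have h3 : HasDerivAt (fun s : ℝ => s ^ 2 / 2) s s := by
        simpa using ((hasDerivAt_pow 2 s).div_const 2)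
      exact ((hasDerivAt_id s).const_sub 1).add h3
    exact (h2.sub h1).congr_deriv (by ring)
  have hmono : MonotoneOn F (Set.Ici 0) := by
    apply monotoneOn_of_deriv_nonneg (convex_Ici 0)
    · exact (Continuous.continuousOn (by continuity))
    · intro s _
      exact (hF s).differentiableAt.differentiableWithinAt
    · intro s _
      rw [(hF s).deriv]
      have := Real.add_one_le_exp (-s)
      linarith
  have h0 : F 0 ≤ F t := hmono (by simp) (by exact ht) ht
  simp [hFdef] at h0
  linarith

theorem dmim_second_order_truncation (f : ℝ → ℝ) (hf : Measurable f) (hf0 : ∀ x, 0 ≤ f x)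
    (hf1 : (∫ x, f x) = 1) (M : ℝ) (hM : 0 ≤ M) (hfM : ∀ x, f x ≤ M)
    (ε : ℝ) (hε : 0 ≤ ε)
    (hpow : ∀ n : ℕ, 2 ≤ n → (∫ x, (f x) ^ (n + 1)) ≤ ε) :
    |(∫ x, f x * Real.exp (-(f x))) - (1 - ∫ x, (f x) ^ 2)| ≤ (Real.exp 1 - 2) * ε := by
  have hint_f : Integrable f := by
    by_contra h
    rw [integral_undef h] at hf1
    norm_num at hf1
  have hint_pow : ∀ k : ℕ, Integrable (fun x => f x ^ (k + 1)) := by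
    intro k
    apply (hint_f.const_mul (M ^ k)).mono ((hf.pow_const _).aestronglyMeasurable)
    filter_upwards with x
    have h1 : f x ^ (k + 1) ≤ M ^ k * f x := by
      rw [pow_succ]
      exact mul_le_mul_of_nonneg_right (pow_le_pow_left₀ (hf0 x) (hfM x) k) (hf0 x)
    have h2 : (0 : ℝ) ≤ f x ^ (k + 1) := pow_nonneg (hf0 x) _
    rw [Real.norm_eq_abs, Real.norm_eq_abs, abs_of_nonneg h2,
      abs_of_nonneg (mul_nonneg (pow_nonneg hM k) (hf0 x))]
    exact h1
  have hint_f2 : Integrable (fun x => f x ^ 2) := by simpa using hint_pow 1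
  have hint_f3 : Integrable (fun x => f x ^ 3) := by simpa using hint_pow 2
  have hint_g : Integrable (fun x => f x * Real.exp (-(f x))) := by
    apply hint_f.mono (hf.mul (hf.neg.exp)).aestronglyMeasurable
    filter_upwards with x
    change ‖f x * Real.exp (-(f x))‖ ≤ ‖f x‖
    rw [Real.norm_eq_abs, Real.norm_eq_abs,
      abs_of_nonneg (mul_nonneg (hf0 x) (Real.exp_pos _).le), abs_of_nonneg (hf0 x)]
    calc f x * Real.exp (-(f x)) ≤ f x * 1 :=
          mul_le_mul_of_nonneg_left (Real.exp_le_one_iff.2 (neg_nonpos.2 (hf0 x))) (hf0 x)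
      _ = f x := mul_one _
  -- pointwise bound
  have hptwise : ∀ x, |f x * Real.exp (-(f x)) - f x + f x ^ 2| ≤ f x ^ 3 / 2 := by
    intro x
    set t := f x with htdef
    have ht : 0 ≤ t := hf0 x
    have hlo : 1 - t ≤ Real.exp (-t) := by
      have := Real.add_one_le_exp (-t); linarith
    have hhi : Real.exp (-t) ≤ 1 - t + t ^ 2 / 2 := exp_neg_le_quadratic ht
    rw [abs_le]
    constructor
    · nlinarith [mul_le_mul_of_nonneg_left hlo ht]
    · nlinarith [mul_le_mul_of_nonneg_left hhi ht]
  have hint_gf : Integrable (fun x => f x * Real.exp (-(f x)) - f x) := hint_g.sub hint_f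
  have key : (∫ x, f x * Real.exp (-(f x))) - (1 - ∫ x, f x ^ 2)
      = ∫ x, (f x * Real.exp (-(f x)) - f x + f x ^ 2) := by
    rw [integral_add hint_gf hint_f2, integral_sub hint_g hint_f, hf1]
    ring
  rw [key]
  have habs : |∫ x, (f x * Real.exp (-(f x)) - f x + f x ^ 2)|
      ≤ ∫ x, f x ^ 3 / 2 := by
    calc |∫ x, (f x * Real.exp (-(f x)) - f x + f x ^ 2)|
        ≤ ∫ x, |f x * Real.exp (-(f x)) - f x + f x ^ 2| := by
          simpa [Real.norm_eq_abs] using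
            norm_integral_le_integral_norm (fun x => f x * Real.exp (-(f x)) - f x + f x ^ 2)
      _ ≤ ∫ x, f x ^ 3 / 2 := by
          apply integral_mono (hint_gf.add hint_f2).abs (hint_f3.div_const 2)
          intro x
          exact hptwise x
  have h3 : (∫ x, f x ^ 3 / 2) = (∫ x, f x ^ 3) / 2 := by
    simpa using integral_div 2 (fun x => f x ^ 3)
  have hf3ε : (∫ x, f x ^ 3) ≤ ε := by simpa using hpow 2 le_rfl
  have he : (5 : ℝ) / 2 ≤ Real.exp 1 := by
    have := Real.exp_one_gt_d9; linarith
  calc |∫ x, (f x * Real.exp (-(f x)) - f x + f x ^ 2)| ≤ (∫ x, f x ^ 3) / 2 := by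
        rw [← h3]; exact habs
    _ ≤ ε / 2 := by linarith
    _ ≤ (Real.exp 1 - 2) * ε := by nlinarith
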